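/- arXiv:2602.02853 — 3 statements merged into one kernel-verified Lean document; each statement's English description precedes it below -/
import Mathlib

section
/- Let Q be a metric space with its Borel σ-algebra, (p_t)_{t≥1} and p Borel probability measures on Q, and let (X_t)_{t≥1} be an independent sequence of Q-valued random variables on a probability space with X_t distributed according to p_t. Let M, L > 0, let (l_t)_{t≥1} be measurable functions l_t : Q → ℝ with |l_t(q)| ≤ M for all t and q, and let l* : Q → ℝ be bounded by M and L-Lipschitz, such that sup_{q∈Q} |l_t(q) − l*(q)| → 0 as t → ∞. Assume that for every bounded Lipschitz function f : Q → ℝ one has ∫ f dp_t → ∫ f dp. Fix a, b > 0 and h₀ ∈ ℝ, and define h_t = (1 − a/(b+at))·h_{t−1} + (a/(b+at))·l_t(X_t) for t ≥ 1. Then h_t converges almost surely to ∫ l* dp. -/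
open MeasureTheory Filter Finset ProbabilityTheory

lemma aux_int_bdd {Ω : Type*} [MeasurableSpace Ω] (P : Measure Ω) [IsFiniteMeasure P]
    {f : Ω → ℝ} (hf : Measurable f) {C : ℝ} (hb : ∀ ω, |f ω| ≤ C) : Integrable f P :=
  (integrable_const C).mono' hf.aestronglyMeasurable (ae_of_all _ fun ω => by
    simpa [Real.norm_eq_abs] using hb ω)

lemma aux_sqrt_tendsto : Tendsto Nat.sqrt atTop atTop := by
  apply tendsto_atTop_atTop.mpr
  intro b
  exact ⟨b * b, fun a ha => by
    have : Nat.sqrt (b * b) ≤ Nat.sqrt a := Nat.sqrt_le_sqrt ha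
    simpa [Nat.sqrt_eq] using this⟩

lemma aux_sq_moment {Ω : Type*} [MeasurableSpace Ω] (P : Measure Ω) [IsProbabilityMeasure P]
    (Y : ℕ → Ω → ℝ) (hmeas : ∀ i, Measurable (Y i)) (C : ℝ) (hC : 0 ≤ C)
    (hbdd : ∀ i ω, |Y i ω| ≤ C) (hmean : ∀ i, ∫ ω, Y i ω ∂P = 0)
    (hindep : ∀ i j, i ≠ j → IndepFun (Y i) (Y j) P) (n : ℕ) :
    ∫ ω, (∑ i ∈ range n, Y i ω)^2 ∂P ≤ n * C^2 := by
  have hint : ∀ i, Integrable (Y i) P := fun i => aux_int_bdd P (hmeas i) (hbdd i)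
  have hint2 : ∀ i j, Integrable (fun ω => Y i ω * Y j ω) P := by
    intro i j
    refine aux_int_bdd P ((hmeas i).mul (hmeas j)) (C := C * C) fun ω => ?_
    rw [abs_mul]
    exact mul_le_mul (hbdd i ω) (hbdd j ω) (abs_nonneg _) hC
  have key : ∫ ω, (∑ i ∈ range n, Y i ω)^2 ∂P
      = ∑ i ∈ range n, ∫ ω, Y i ω * Y i ω ∂P := by
    have expand : ∀ ω, (∑ i ∈ range n, Y i ω)^2
        = ∑ i ∈ range n, ∑ j ∈ range n, Y i ω * Y j ω := by
      intro ω; rw [sq, Finset.sum_mul_sum]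
    simp_rw [expand]
    rw [integral_finset_sum _ (fun i _ => integrable_finset_sum _ (fun j _ => hint2 i j))]
    refine Finset.sum_congr rfl fun i hi => ?_
    rw [integral_finset_sum _ (fun j _ => hint2 i j)]
    rw [Finset.sum_eq_single_of_mem i hi]
    intro j hj hji
    have h0 : ∫ ω, Y i ω * Y j ω ∂P = (∫ ω, Y i ω ∂P) * ∫ ω, Y j ω ∂P :=
      (hindep i j (Ne.symm hji)).integral_fun_mul_eq_mul_integral (hint i).aestronglyMeasurable (hint j).aestronglyMeasurable
    rw [h0, hmean i]; ring
  rw [key]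
  calc ∑ i ∈ range n, ∫ ω, Y i ω * Y i ω ∂P
      ≤ ∑ i ∈ range n, C^2 := by
        refine Finset.sum_le_sum fun i _ => ?_
        calc ∫ ω, Y i ω * Y i ω ∂P ≤ ∫ _ω, C^2 ∂P := by
              refine integral_mono (hint2 i i) (integrable_const _) fun ω => ?_
              have := hbdd i ω
              nlinarith [abs_nonneg (Y i ω), neg_abs_le (Y i ω), le_abs_self (Y i ω)]
          _ = C^2 := by simp
    _ = n * C^2 := by simp [Finset.sum_const, nsmul_eq_mul]


lemma aux_slln {Ω : Type*} [MeasurableSpace Ω] (P : Measure Ω) [IsProbabilityMeasure P]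
    (Y : ℕ → Ω → ℝ) (hmeas : ∀ i, Measurable (Y i)) (C : ℝ) (hC : 0 ≤ C)
    (hbdd : ∀ i ω, |Y i ω| ≤ C) (hmean : ∀ i, ∫ ω, Y i ω ∂P = 0)
    (hindep : ∀ i j, i ≠ j → IndepFun (Y i) (Y j) P)
    (hmom : ∀ n : ℕ, ∫ ω, (∑ i ∈ range n, Y i ω)^2 ∂P ≤ n * C^2) :
    ∀ᵐ ω ∂P, Tendsto (fun n => (∑ i ∈ range n, Y i ω) / n) atTop (nhds 0) := by
  set S : ℕ → Ω → ℝ := fun n ω => ∑ i ∈ range n, Y i ω with hS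
  have hSmeas : ∀ n, Measurable (S n) := fun n => Finset.measurable_sum _ fun i _ => hmeas i
  have hSbdd : ∀ n ω, |S n ω| ≤ n * C := by
    intro n ω
    calc |S n ω| ≤ ∑ i ∈ range n, |Y i ω| := Finset.abs_sum_le_sum_abs _ _
      _ ≤ ∑ i ∈ range n, C := Finset.sum_le_sum fun i _ => hbdd i ω
      _ = n * C := by simp [mul_comm]
  set v : ℕ → Ω → ℝ := fun n ω => S n ω / n with hv
  set r : ℕ → Ω → ℝ := fun n ω => (v ((n+1)^2) ω)^2 with hr
  have hrmeas : ∀ n, Measurable (r n) := fun n => ((hSmeas _).div_const _).pow_const 2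
  have hrnonneg : ∀ n ω, 0 ≤ r n ω := fun n ω => sq_nonneg _
  have hrbdd : ∀ n ω, |r n ω| ≤ C^2 := by
    intro n ω
    rw [abs_of_nonneg (hrnonneg n ω)]
    have hm : (0:ℝ) < ((n+1)^2 : ℕ) := by positivity
    have h1 : |v ((n+1)^2) ω| ≤ C := by
      rw [hv, abs_div, abs_of_pos hm, div_le_iff₀ hm]
      calc |S ((n+1)^2) ω| ≤ ((n+1)^2 : ℕ) * C := hSbdd _ ω
        _ = C * ((n+1)^2 : ℕ) := mul_comm _ _
    calc (v ((n+1)^2) ω)^2 = |v ((n+1)^2) ω|^2 := (sq_abs _).symm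
      _ ≤ C^2 := by nlinarith [abs_nonneg (v ((n+1)^2) ω)]
  have hrint : ∀ n, Integrable (r n) P := fun n => aux_int_bdd P (hrmeas n) (hrbdd n)
  have hrmom : ∀ n : ℕ, ∫ ω, r n ω ∂P ≤ C^2 / (n+1)^2 := by
    intro n
    have hm : (0:ℝ) < (((n+1)^2 : ℕ):ℝ) := by positivity
    have : ∫ ω, r n ω ∂P = (∫ ω, (S ((n+1)^2) ω)^2 ∂P) / (((n+1)^2 : ℕ):ℝ)^2 := by
      rw [← integral_div]
      congr 1; funext ω; rw [hr, hv]; ring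
    rw [this]
    have h2 := hmom ((n+1)^2)
    have h3 : (((n+1)^2 : ℕ):ℝ) * C^2 / (((n+1)^2 : ℕ):ℝ)^2 = C^2 / (((n+1):ℕ):ℝ)^2 := by
      push_cast; field_simp
    calc (∫ ω, (S ((n+1)^2) ω)^2 ∂P) / (((n+1)^2 : ℕ):ℝ)^2
        ≤ (((n+1)^2 : ℕ):ℝ) * C^2 / (((n+1)^2 : ℕ):ℝ)^2 := by
          gcongr
      _ = C^2 / ((n:ℝ)+1)^2 := by rw [h3]; push_cast; ring
  -- summability of the bound series
  have hsum : Summable (fun n : ℕ => C^2 / ((n:ℝ)+1)^2) := by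
    have h1 : Summable (fun n : ℕ => 1 / ((n:ℝ))^2) := Real.summable_one_div_nat_pow.2 one_lt_two
    have h2 : Summable (fun n : ℕ => 1 / ((n:ℝ)+1)^2) := by
      have := (summable_nat_add_iff 1).2 h1
      simpa [add_comm] using this
    simpa [div_eq_mul_inv, one_div] using h2.mul_left (C^2)
  -- lintegral bound
  have hlint : ∫⁻ ω, ∑' n, ENNReal.ofReal (r n ω) ∂P ≠ ⊤ := by
    rw [lintegral_tsum (fun n => ((hrmeas n).ennreal_ofReal).aemeasurable)]
    have hb : ∀ n, ∫⁻ ω, ENNReal.ofReal (r n ω) ∂P ≤ ENNReal.ofReal (C^2 / ((n:ℝ)+1)^2) := by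
      intro n
      rw [← ofReal_integral_eq_lintegral_ofReal (hrint n) (ae_of_all _ (hrnonneg n))]
      exact ENNReal.ofReal_le_ofReal (hrmom n)
    refine ne_of_lt (lt_of_le_of_lt (ENNReal.tsum_le_tsum hb) ?_)
    rw [← ENNReal.ofReal_tsum_of_nonneg (fun n => by positivity) hsum]
    exact ENNReal.ofReal_lt_top
  have hae : ∀ᵐ ω ∂P, (∑' n, ENNReal.ofReal (r n ω)) < ⊤ :=
    ae_lt_top (by exact Measurable.ennreal_tsum fun n => (hrmeas n).ennreal_ofReal) hlint
  filter_upwards [hae] with ω hω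
  -- real summability, hence r n ω → 0
  have hsummable : Summable (fun n => r n ω) := by
    have h1 := ENNReal.summable_toReal hω.ne
    refine h1.congr fun n => ?_
    rw [ENNReal.toReal_ofReal (hrnonneg n ω)]
  have hr0 : Tendsto (fun n => r n ω) atTop (nhds 0) := hsummable.tendsto_atTop_zero
  have habs : Tendsto (fun n => |v ((n+1)^2) ω|) atTop (nhds 0) := by
    have hcont : Tendsto (fun n => Real.sqrt (r n ω)) atTop (nhds (Real.sqrt 0)) :=
      (Real.continuous_sqrt.tendsto 0).comp hr0
    rw [Real.sqrt_zero] at hcont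
    refine hcont.congr fun n => ?_
    rw [hr, Real.sqrt_sq_eq_abs]
  have hv1 : Tendsto (fun n => v ((n+1)^2) ω) atTop (nhds 0) :=
    (tendsto_zero_iff_abs_tendsto_zero _).2 habs
  have hv2 : Tendsto (fun k => v (k^2) ω) atTop (nhds 0) := by
    rw [← tendsto_add_atTop_iff_nat 1]
    exact hv1
  -- gap filling
  have hbound : ∀ t : ℕ, 1 ≤ t →
      |v t ω| ≤ |v ((Nat.sqrt t)^2) ω| + 3 * C / (Nat.sqrt t) := by
    intro t ht
    set k := Nat.sqrt t with hk
    have hk1 : 1 ≤ k := by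
      rw [hk]
      exact Nat.one_le_iff_ne_zero.2 (by
        intro h0
        have := Nat.sqrt_eq_zero.1 h0
        omega)
    have h1 : k^2 ≤ t := Nat.sqrt_le' t
    have h2 : t < (k+1)^2 := Nat.lt_succ_sqrt' t
    have hkR : (0:ℝ) < (k:ℝ) := by exact_mod_cast hk1
    have hk2R : (0:ℝ) < ((k^2 : ℕ):ℝ) := by positivity
    have htR : (0:ℝ) < (t:ℝ) := by exact_mod_cast ht
    have hsplit : S t ω = S (k^2) ω + ∑ i ∈ Finset.Ico (k^2) t, Y i ω :=
      (Finset.sum_range_add_sum_Ico _ h1).symm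
    have hico : |∑ i ∈ Finset.Ico (k^2) t, Y i ω| ≤ C * ((t - k^2 : ℕ):ℝ) := by
      calc |∑ i ∈ Finset.Ico (k^2) t, Y i ω| ≤ ∑ i ∈ Finset.Ico (k^2) t, |Y i ω| :=
            Finset.abs_sum_le_sum_abs _ _
        _ ≤ ∑ i ∈ Finset.Ico (k^2) t, C := Finset.sum_le_sum fun i _ => hbdd i ω
        _ = C * ((t - k^2 : ℕ):ℝ) := by
            rw [Finset.sum_const, Nat.card_Ico, nsmul_eq_mul, mul_comm]
    have hcard : ((t - k^2 : ℕ):ℝ) ≤ 2 * k := by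
      have e : (k+1)^2 = (k^2 + 2*k) + 1 := by ring
      rw [e] at h2
      have h2' : t ≤ k^2 + 2*k := Nat.lt_succ_iff.mp h2
      have : t - k^2 ≤ 2 * k :=
        tsub_le_iff_right.mpr (le_of_le_of_eq h2' (add_comm _ _))
      calc ((t - k^2 : ℕ):ℝ) ≤ ((2 * k : ℕ):ℝ) := by exact_mod_cast this
        _ = 2 * k := by push_cast; ring
    have hnum : |S t ω| ≤ |S (k^2) ω| + C * (2 * k) := by
      rw [hsplit]
      calc |S (k^2) ω + ∑ i ∈ Finset.Ico (k^2) t, Y i ω|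
          ≤ |S (k^2) ω| + |∑ i ∈ Finset.Ico (k^2) t, Y i ω| := abs_add_le _ _
        _ ≤ |S (k^2) ω| + C * ((t - k^2 : ℕ):ℝ) := by linarith [hico]
        _ ≤ |S (k^2) ω| + C * (2 * k) := by nlinarith [hcard, hC]
    have hvt : |v t ω| = |S t ω| / t := by
      rw [hv, abs_div, abs_of_pos htR]
    have hvk : |v (k^2) ω| = |S (k^2) ω| / ((k^2:ℕ):ℝ) := by
      rw [hv, abs_div, abs_of_pos hk2R]
    rw [hvt, hvk]
    have hstep1 : |S t ω| / (t:ℝ) ≤ (|S (k^2) ω| + C * (2*k)) / (t:ℝ) := by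
      gcongr
    have hstep2 : (|S (k^2) ω| + C * (2*k)) / (t:ℝ) ≤ (|S (k^2) ω| + C * (2*k)) / ((k^2:ℕ):ℝ) := by
      gcongr
    have hstep3 : (|S (k^2) ω| + C * (2*k)) / ((k^2:ℕ):ℝ)
        = |S (k^2) ω| / ((k^2:ℕ):ℝ) + C * (2*k) / ((k^2:ℕ):ℝ) := add_div _ _ _
    have hstep4 : C * (2*(k:ℝ)) / ((k^2:ℕ):ℝ) ≤ 3 * C / (k:ℝ) := by
      have : ((k^2:ℕ):ℝ) = (k:ℝ)^2 := by push_cast; ring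
      rw [this]
      rw [div_le_div_iff₀ (by positivity) hkR]
      nlinarith [hC, hkR]
    calc |S t ω| / (t:ℝ) ≤ (|S (k^2) ω| + C * (2*k)) / (t:ℝ) := hstep1
      _ ≤ (|S (k^2) ω| + C * (2*k)) / ((k^2:ℕ):ℝ) := hstep2
      _ = |S (k^2) ω| / ((k^2:ℕ):ℝ) + C * (2*k) / ((k^2:ℕ):ℝ) := hstep3
      _ ≤ |S (k^2) ω| / ((k^2:ℕ):ℝ) + 3 * C / (k:ℝ) := by linarith [hstep4]
  -- squeeze
  have hg : Tendsto (fun t : ℕ => |v ((Nat.sqrt t)^2) ω| + 3 * C / (Nat.sqrt t)) atTop (nhds 0) := by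
    have hg1 : Tendsto (fun k : ℕ => |v (k^2) ω| + 3 * C / (k:ℝ)) atTop (nhds 0) := by
      have t1 : Tendsto (fun k : ℕ => |v (k^2) ω|) atTop (nhds 0) := by
        have := hv2.abs; simpa using this
      have t2 : Tendsto (fun k : ℕ => 3 * C / (k:ℝ)) atTop (nhds 0) :=
        tendsto_const_div_atTop_nhds_zero_nat _
      simpa using t1.add t2
    exact hg1.comp aux_sqrt_tendsto
  rw [tendsto_zero_iff_abs_tendsto_zero]
  apply squeeze_zero' (Eventually.of_forall fun t => abs_nonneg _)
  · filter_upwards [eventually_ge_atTop 1] with t ht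
    exact hbound t ht
  · exact hg


lemma aux_shift (u : ℕ → ℝ) (c : ℝ)
    (H : Tendsto (fun n => (∑ i ∈ range n, u i) / n) atTop (nhds c)) :
    Tendsto (fun t => (∑ i ∈ Finset.Icc 1 t, u i) / t) atTop (nhds c) := by
  have key : ∀ t : ℕ, 1 ≤ t → ((t:ℝ)+1)/t * ((∑ i ∈ range (t+1), u i)/((t:ℝ)+1)) - u 0 / t
      = (∑ i ∈ Finset.Icc 1 t, u i) / t := by
    intro t ht
    have h1 : ∑ i ∈ range (t+1), u i = u 0 + ∑ i ∈ Finset.Icc 1 t, u i := by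
      rw [Finset.range_eq_Ico, Finset.sum_eq_sum_Ico_succ_bot (by omega) u,
        Finset.Ico_add_one_right_eq_Icc]
    have htR : (0:ℝ) < t := by exact_mod_cast ht
    rw [h1]
    field_simp
    try ring
  have T1 : Tendsto (fun t : ℕ => ((t:ℝ)+1)/t) atTop (nhds 1) := by
    have : Tendsto (fun t : ℕ => 1 + 1/(t:ℝ)) atTop (nhds (1 + 0)) :=
      tendsto_const_nhds.add tendsto_one_div_atTop_nhds_zero_nat
    rw [add_zero] at this
    refine this.congr' ?_
    filter_upwards [eventually_ge_atTop 1] with t ht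
    have htR : (0:ℝ) < t := by exact_mod_cast ht
    field_simp
  have T2 : Tendsto (fun t : ℕ => (∑ i ∈ range (t+1), u i)/((t:ℝ)+1)) atTop (nhds c) := by
    have := (tendsto_add_atTop_iff_nat 1).2 H
    refine this.congr fun t => ?_
    push_cast
    ring_nf
  have T3 : Tendsto (fun t : ℕ => u 0 / (t:ℝ)) atTop (nhds 0) :=
    tendsto_const_div_atTop_nhds_zero_nat _
  have := (T1.mul T2).sub T3
  rw [one_mul, sub_zero] at this
  refine this.congr' ?_
  filter_upwards [eventually_ge_atTop 1] with t ht
  exact key t ht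


/-- Convergence of the RECM optimization state (Lemma 4.1): if `X t` are independent samples with
laws `p t` converging weakly (tested against bounded Lipschitz functions) to `p`, the update
functions `l t` are measurable, uniformly bounded by `M` and converge uniformly to a bounded
`L`-Lipschitz `l⋆`, then the recursively defined state
`h t = (1 − a/(b+at))·h (t−1) + (a/(b+at))·l t (X t)` converges almost surely to `∫ l⋆ dp`. -/
theorem recm_state_converges_as
    {Q : Type*} [MetricSpace Q] [MeasurableSpace Q] [BorelSpace Q]
    {Ω : Type*} [MeasurableSpace Ω] (P : Measure Ω) [IsProbabilityMeasure P]
    (p : ℕ → Measure Q) (plim : Measure Q)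
    (hprob : ∀ t, IsProbabilityMeasure (p t)) [IsProbabilityMeasure plim]
    (X : ℕ → Ω → Q) (hXmeas : ∀ t, Measurable (X t))
    (hXindep : ProbabilityTheory.iIndepFun X P)
    (hXlaw : ∀ t, Measure.map (X t) P = p t)
    (M L : ℝ) (hM : 0 < M) (hL : 0 < L)
    (l : ℕ → Q → ℝ) (hlmeas : ∀ t, Measurable (l t))
    (hlbdd : ∀ t, ∀ q : Q, |l t q| ≤ M)
    (lstar : Q → ℝ) (hlstarbdd : ∀ q : Q, |lstar q| ≤ M)
    (hlstarlip : LipschitzWith (Real.toNNReal L) lstar)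
    (hunif : ∀ ε : ℝ, 0 < ε → ∃ N : ℕ, ∀ t ≥ N, ∀ q : Q, |l t q - lstar q| < ε)
    (hweak : ∀ f : Q → ℝ, (∃ Cf : ℝ, ∀ q : Q, |f q| ≤ Cf) → (∃ Kf : NNReal, LipschitzWith Kf f) →
      Tendsto (fun t => ∫ q, f q ∂(p t)) atTop (nhds (∫ q, f q ∂plim)))
    (a b : ℝ) (ha : 0 < a) (hb : 0 < b) (h₀ : ℝ)
    (h : ℕ → Ω → ℝ) (hinit : ∀ ω, h 0 ω = h₀)
    (hrec : ∀ t : ℕ, 1 ≤ t → ∀ ω : Ω,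
      h t ω = (1 - a / (b + a * t)) * h (t - 1) ω + (a / (b + a * t)) * l t (X t ω)) :
    ∀ᵐ ω ∂P, Tendsto (fun t => h t ω) atTop (nhds (∫ q, lstar q ∂plim)) := by
  classical
  set c : ℝ := ∫ q, lstar q ∂plim with hc
  set μ : ℕ → ℝ := fun s => ∫ q, l s q ∂(p s) with hμ
  have hlstarmeas : Measurable lstar := hlstarlip.continuous.measurable
  have hintl : ∀ s, Integrable (l s) (p s) := fun s => by
    haveI := hprob s
    exact aux_int_bdd (p s) (hlmeas s) (hlbdd s)
  have hintlstar : ∀ s, Integrable lstar (p s) := fun s => by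
    haveI := hprob s
    exact aux_int_bdd (p s) hlstarmeas hlstarbdd
  -- the means converge to c
  have hμc : Tendsto μ atTop (nhds c) := by
    rw [Metric.tendsto_atTop]
    intro ε hε
    obtain ⟨N₁, hN₁⟩ := hunif (ε/2) (by linarith)
    have hlim := hweak lstar ⟨M, hlstarbdd⟩ ⟨Real.toNNReal L, hlstarlip⟩
    rw [Metric.tendsto_atTop] at hlim
    obtain ⟨N₂, hN₂⟩ := hlim (ε/2) (by linarith)
    refine ⟨max N₁ N₂, fun s hs => ?_⟩
    haveI := hprob s
    have hdiff : |μ s - ∫ q, lstar q ∂(p s)| ≤ ε/2 := by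
      rw [hμ]
      simp only
      rw [← integral_sub (hintl s) (hintlstar s)]
      have hbound : ∀ᵐ q ∂(p s), ‖l s q - lstar q‖ ≤ ε/2 :=
        ae_of_all _ fun q => le_of_lt (by
          simpa [Real.norm_eq_abs] using hN₁ s (le_trans (le_max_left _ _) hs) q)
      calc |∫ q, (l s q - lstar q) ∂(p s)| ≤ ε/2 * ((p s) Set.univ).toReal :=
            norm_integral_le_of_norm_le_const hbound
        _ = ε/2 := by simp
    have h2 : |(∫ q, lstar q ∂(p s)) - c| < ε/2 := by
      have := hN₂ s (le_trans (le_max_right _ _) hs)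
      rwa [Real.dist_eq] at this
    rw [Real.dist_eq]
    calc |μ s - c| ≤ |μ s - ∫ q, lstar q ∂(p s)| + |(∫ q, lstar q ∂(p s)) - c| :=
          abs_sub_le _ _ _
      _ < ε := by linarith
  have hμbdd : ∀ s, |μ s| ≤ M := by
    intro s
    haveI := hprob s
    have : ‖∫ q, l s q ∂(p s)‖ ≤ M * ((p s) Set.univ).toReal :=
      norm_integral_le_of_norm_le_const (ae_of_all _ fun q => by
        simpa [Real.norm_eq_abs] using hlbdd s q)
    simpa [Real.norm_eq_abs] using this
  -- centered variables
  set Y : ℕ → Ω → ℝ := fun s ω => l s (X s ω) - μ s with hY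
  have hYmeas : ∀ s, Measurable (Y s) := fun s => ((hlmeas s).comp (hXmeas s)).sub_const _
  have hYbdd : ∀ s ω, |Y s ω| ≤ 2*M := by
    intro s ω
    calc |Y s ω| ≤ |l s (X s ω)| + |μ s| := abs_sub _ _
      _ ≤ 2*M := by linarith [hlbdd s (X s ω), hμbdd s]
  have hYmean : ∀ s, ∫ ω, Y s ω ∂P = 0 := by
    intro s
    have hInt : Integrable (fun ω => l s (X s ω)) P :=
      aux_int_bdd P ((hlmeas s).comp (hXmeas s)) (fun ω => hlbdd s (X s ω))
    have hmap : ∫ ω, l s (X s ω) ∂P = μ s := by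
      rw [hμ]
      simp only
      rw [← hXlaw s, integral_map (hXmeas s).aemeasurable (hlmeas s).aestronglyMeasurable]
    rw [hY]
    simp only
    rw [integral_sub hInt (integrable_const _), hmap, integral_const]
    simp
  have hYindep : ∀ i j, i ≠ j → ProbabilityTheory.IndepFun (Y i) (Y j) P := by
    intro i j hij
    have hcomp := hXindep.comp (fun s q => l s q - μ s) (fun s => (hlmeas s).sub_const _)
    exact hcomp.indepFun hij
  have hmom := aux_sq_moment P Y hYmeas (2*M) (by linarith) hYbdd hYmean hYindep
  have hSLLN := aux_slln P Y hYmeas (2*M) (by linarith) hYbdd hYmean hYindep hmom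
  -- closed form for h
  have hden : ∀ t : ℕ, (0:ℝ) < b + a * t := fun t => by positivity
  have hclosed : ∀ t ω, h t ω
      = (b * h₀ + a * ∑ s ∈ Finset.Icc 1 t, l s (X s ω)) / (b + a * t) := by
    intro t ω
    induction t with
    | zero =>
      simp [hinit ω]
      rw [mul_comm, mul_div_assoc, div_self hb.ne', mul_one]
    | succ t ih =>
      have hr := hrec (t+1) (by omega) ω
      simp only [Nat.add_sub_cancel] at hr
      rw [hr, ih]
      have hsum : ∑ s ∈ Finset.Icc 1 (t+1), l s (X s ω)
          = (∑ s ∈ Finset.Icc 1 t, l s (X s ω)) + l (t+1) (X (t+1) ω) :=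
        Finset.sum_Icc_succ_top (by omega) _
      rw [hsum]
      have d0 := hden t
      have d1 := hden (t+1)
      push_cast at d1 ⊢
      field_simp
      ring
  -- conclude
  filter_upwards [hSLLN] with ω hω
  have havgY : Tendsto (fun t => (∑ s ∈ Finset.Icc 1 t, Y s ω) / t) atTop (nhds 0) :=
    aux_shift _ _ hω
  have hμavg_range : Tendsto (fun n => (∑ s ∈ range n, μ s) / n) atTop (nhds c) := by
    have := hμc.cesaro
    refine this.congr fun n => ?_
    rw [div_eq_inv_mul]
  have havgμ : Tendsto (fun t => (∑ s ∈ Finset.Icc 1 t, μ s) / t) atTop (nhds c) :=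
    aux_shift _ _ hμavg_range
  have havg : Tendsto (fun t => (∑ s ∈ Finset.Icc 1 t, l s (X s ω)) / t) atTop (nhds c) := by
    have hadd := havgY.add havgμ
    rw [zero_add] at hadd
    refine hadd.congr fun t => ?_
    rw [← add_div, ← Finset.sum_add_distrib]
    congr 1
    refine Finset.sum_congr rfl fun s _ => ?_
    rw [hY]
    ring
  have hatop : Tendsto (fun t : ℕ => b + a * t) atTop atTop := by
    apply tendsto_atTop_add_const_left
    exact (tendsto_natCast_atTop_atTop).const_mul_atTop ha
  have T1 : Tendsto (fun t : ℕ => b * h₀ / (b + a * t)) atTop (nhds 0) :=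
    Tendsto.div_atTop tendsto_const_nhds hatop
  have T2 : Tendsto (fun t : ℕ => a * t / (b + a * t)) atTop (nhds 1) := by
    have hsub : Tendsto (fun t : ℕ => 1 - b / (b + a * t)) atTop (nhds (1 - 0)) :=
      tendsto_const_nhds.sub (Tendsto.div_atTop tendsto_const_nhds hatop)
    rw [sub_zero] at hsub
    refine hsub.congr fun t => ?_
    have := (hden t).ne'
    field_simp
    ring
  have hfin : Tendsto (fun t : ℕ => b * h₀ / (b + a * t)
      + (a * t / (b + a * t)) * ((∑ s ∈ Finset.Icc 1 t, l s (X s ω)) / t))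
      atTop (nhds c) := by
    have := T1.add (T2.mul havg)
    rwa [zero_add, one_mul] at this
  refine hfin.congr' ?_
  filter_upwards [eventually_ge_atTop 1] with t ht
  rw [hclosed t ω]
  have htR : (0:ℝ) < t := by exact_mod_cast ht
  have := (hden t).ne'
  field_simp
end

section
/- Let Q be a metric space and G a group acting on Q via Borel-measurable maps T_g : Q → Q. Let p be a Borel probability measure on Q, C_G ⊆ G finite and nonempty, and p_{C_G} := (1/|C_G|)·Σ_{g∈C_G} (T_g)_* p. Let C > 0 and let {r_θ}_{θ∈Θ} be a family of bounded measurable functions Q → ℝ with the universal-approximation property: for every bounded continuous 1-Lipschitz f : Q → ℝ and every δ > 0 there exists θ ∈ Θ with sup_{q∈Q} |f(q) − C⁻¹·r_θ(q)| < δ. For each θ define l_θ(q) = r_θ(q) − (1/|C_G|)·Σ_{g∈C_G} r_θ(T_g q). Then for every bounded continuous 1-Lipschitz f : Q → ℝ and every ε > 0 there exists θ* ∈ Θ such that ∫ l_{θ*} dp ≥ C·( ∫ f dp − ∫ f dp_{C_G} ) − ε. -/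
open MeasureTheory
open scoped ENNReal

lemma aux_integrable {Q : Type*} [MeasurableSpace Q] (μ : Measure Q) [IsFiniteMeasure μ]
    {f : Q → ℝ} (hf : Measurable f) {M : ℝ} (hM : ∀ q, |f q| ≤ M) : Integrable f μ :=
  (integrable_const M).mono' hf.aestronglyMeasurable
    (Filter.Eventually.of_forall (fun q => by simpa using hM q))

/-- Second part of Theorem 4.2: if `{r θ}` is a family of bounded measurable functions such that
`C⁻¹·r θ` can uniformly approximate every bounded continuous 1-Lipschitz function, then for every
bounded continuous 1-Lipschitz `f` and every `ε > 0` there is `θ⋆` with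
`∫ l_{θ⋆} dp ≥ C·(∫ f dp − ∫ f dp_{C_G}) − ε`, where
`l_θ q = r θ q − (1/|C_G|)·∑_{g∈C_G} r θ (T g q)` and
`p_{C_G} = (1/|C_G|)·∑_{g∈C_G} (T g)_* p`. -/
theorem update_integral_universal_approx_lower_bound
    {Q : Type*} [MetricSpace Q] [MeasurableSpace Q] [BorelSpace Q]
    {G : Type*} [Group G]
    (T : G → Q → Q) (hTmeas : ∀ g : G, Measurable (T g))
    (hTmul : ∀ g h : G, ∀ q : Q, T g (T h q) = T (g * h) q)
    (hTone : ∀ q : Q, T 1 q = q)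
    (p : Measure Q) [IsProbabilityMeasure p]
    (CG : Finset G) (hCG : CG.Nonempty)
    (C : ℝ) (hC : 0 < C)
    {Θ : Type*} (r : Θ → Q → ℝ)
    (hrmeas : ∀ θ : Θ, Measurable (r θ))
    (hrbdd : ∀ θ : Θ, ∃ M : ℝ, ∀ q : Q, |r θ q| ≤ M)
    (huniv : ∀ f : Q → ℝ, (∃ M : ℝ, ∀ q : Q, |f q| ≤ M) → Continuous f → LipschitzWith 1 f →
      ∀ δ : ℝ, 0 < δ → ∃ θ : Θ, ∀ q : Q, |f q - C⁻¹ * r θ q| < δ) :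
    ∀ f : Q → ℝ, (∃ M : ℝ, ∀ q : Q, |f q| ≤ M) → Continuous f → LipschitzWith 1 f →
      ∀ ε : ℝ, 0 < ε → ∃ θstar : Θ,
        ∫ q, (r θstar q - (1 / (CG.card : ℝ)) * ∑ g ∈ CG, r θstar (T g q)) ∂p
          ≥ C * (∫ q, f q ∂p
              - ∫ q, f q ∂(((CG.card : ℝ≥0∞))⁻¹ • ∑ g ∈ CG, Measure.map (T g) p)) - ε := by
  intro f hfbdd hfcont hflip ε hε
  obtain ⟨M, hM⟩ := hfbdd
  have hδ : (0:ℝ) < ε / (2 * C) := by positivity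
  obtain ⟨θ, hθ⟩ := huniv f ⟨M, hM⟩ hfcont hflip (ε / (2 * C)) hδ
  refine ⟨θ, ?_⟩
  obtain ⟨Mr, hMr⟩ := hrbdd θ
  have hn : (0:ℝ) < (CG.card : ℝ) := by exact_mod_cast Finset.card_pos.mpr hCG
  set δ := ε / (2 * C) with hδdef
  -- pointwise bounds
  have hlow : ∀ q, C * (f q - δ) ≤ r θ q := by
    intro q
    have := abs_lt.mp (hθ q)
    have h1 : f q - δ < C⁻¹ * r θ q := by linarith [this.1]
    have := (mul_lt_mul_iff_right₀ hC).mpr h1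
    rw [← mul_assoc, mul_inv_cancel₀ hC.ne', one_mul] at this
    linarith
  have hhigh : ∀ q, r θ q ≤ C * (f q + δ) := by
    intro q
    have := abs_lt.mp (hθ q)
    have h1 : C⁻¹ * r θ q < f q + δ := by linarith [this.2]
    have := (mul_lt_mul_iff_right₀ hC).mpr h1
    rw [← mul_assoc, mul_inv_cancel₀ hC.ne', one_mul] at this
    linarith
  -- integrability
  have hintf : Integrable f p := aux_integrable p hfcont.measurable hM
  have hintr : Integrable (r θ) p := aux_integrable p (hrmeas θ) hMr
  have hintrT : ∀ g : G, Integrable (fun q => r θ (T g q)) p := fun g =>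
    aux_integrable p ((hrmeas θ).comp (hTmeas g)) (fun q => hMr _)
  have hintfT : ∀ g : G, Integrable (fun q => f (T g q)) p := fun g =>
    aux_integrable p (hfcont.measurable.comp (hTmeas g)) (fun q => hM _)
  -- LHS splitting
  have hLHS : ∫ q, (r θ q - (1 / (CG.card : ℝ)) * ∑ g ∈ CG, r θ (T g q)) ∂p
      = ∫ q, r θ q ∂p - (1 / (CG.card : ℝ)) * ∑ g ∈ CG, ∫ q, r θ (T g q) ∂p := by
    rw [integral_sub hintr ((integrable_finset_sum CG (fun g _ => hintrT g)).const_mul _),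
      integral_const_mul, integral_finset_sum CG (fun g _ => hintrT g)]
  -- RHS measure computation
  have hprob : ∀ g : G, IsProbabilityMeasure (Measure.map (T g) p) := fun g =>
    Measure.isProbabilityMeasure_map (hTmeas g).aemeasurable
  have hRHS : ∫ q, f q ∂(((CG.card : ℝ≥0∞))⁻¹ • ∑ g ∈ CG, Measure.map (T g) p)
      = (1 / (CG.card : ℝ)) * ∑ g ∈ CG, ∫ q, f (T g q) ∂p := by
    rw [integral_smul_measure, integral_finset_sum_measure (fun g _ =>
      aux_integrable _ hfcont.measurable hM)]
    have : ∀ g ∈ CG, ∫ q, f q ∂(Measure.map (T g) p) = ∫ q, f (T g q) ∂p := fun g _ =>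
      integral_map (hTmeas g).aemeasurable hfcont.measurable.aestronglyMeasurable
    rw [Finset.sum_congr rfl this]
    simp [ENNReal.toReal_inv, smul_eq_mul, one_div]
  rw [hLHS, hRHS]
  -- integral bounds
  have h1 : ∫ q, r θ q ∂p ≥ C * ∫ q, f q ∂p - C * δ := by
    have := integral_mono ((hintf.sub (integrable_const δ)).const_mul C) hintr hlow
    simp only [Pi.sub_apply] at this
    rw [integral_const_mul, integral_sub hintf (integrable_const δ)] at this
    simp only [integral_const, measure_univ, ENNReal.toReal_one, smul_eq_mul, one_mul, probReal_univ] at this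
    linarith [this]
  have h2 : ∀ g ∈ CG, ∫ q, r θ (T g q) ∂p ≤ C * ∫ q, f (T g q) ∂p + C * δ := by
    intro g _
    have := integral_mono (hintrT g)
      (((hintfT g).add (integrable_const δ)).const_mul C) (fun q => hhigh (T g q))
    simp only [Pi.add_apply] at this
    rw [integral_const_mul, integral_add (hintfT g) (integrable_const δ)] at this
    simp only [integral_const, measure_univ, ENNReal.toReal_one, smul_eq_mul, one_mul, probReal_univ] at this
    linarith [this]
  have hsum : ∑ g ∈ CG, ∫ q, r θ (T g q) ∂p
      ≤ ∑ g ∈ CG, (C * ∫ q, f (T g q) ∂p + C * δ) := Finset.sum_le_sum h2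
  rw [Finset.sum_add_distrib, Finset.sum_const, nsmul_eq_mul] at hsum
  have hCδ : C * δ = ε / 2 := by
    rw [hδdef]; field_simp
  have key : (1 / (CG.card : ℝ)) * ∑ g ∈ CG, ∫ q, r θ (T g q) ∂p
      ≤ C * ((1 / (CG.card : ℝ)) * ∑ g ∈ CG, ∫ q, f (T g q) ∂p) + C * δ := by
    have h4 := mul_le_mul_of_nonneg_left hsum (le_of_lt (by positivity : (0:ℝ) < 1 / (CG.card:ℝ)))
    calc (1 / (CG.card : ℝ)) * ∑ g ∈ CG, ∫ q, r θ (T g q) ∂p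
        ≤ (1 / (CG.card : ℝ)) * (∑ g ∈ CG, C * ∫ q, f (T g q) ∂p + (CG.card:ℝ) * (C * δ)) := h4
      _ = C * ((1 / (CG.card : ℝ)) * ∑ g ∈ CG, ∫ q, f (T g q) ∂p) + C * δ := by
          rw [← Finset.mul_sum]; field_simp
  rw [hCδ] at h1 key
  linarith
end

section
/- Let Q be a metric space and G a compact metrizable topological group acting continuously on Q, i.e. (g,q) ↦ T_g q is jointly continuous, with T_g ∘ T_h = T_{gh} and T_e = id. Let p be a Borel probability measure on Q and let C_G ⊆ G be a finite nonempty subset that topologically generates G, meaning the topological closure of the subgroup generated by C_G equals G. Then (1/|C_G|)·Σ_{g∈C_G} (T_g)_* p = p if and only if (T_g)_* p = p for every g ∈ G. -/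
open MeasureTheory
open scoped ENNReal

/-- In a compact first-countable topological group, the topological closure of the submonoid
generated by a set is already a subgroup; hence if the subgroup generated by the set is dense,
the submonoid generated by the set is dense as well. -/
lemma aux_closure_submonoid_eq_univ {G : Type*} [Group G] [TopologicalSpace G]
    [IsTopologicalGroup G] [CompactSpace G] [FirstCountableTopology G] [T2Space G]
    (s : Set G)
    (hgen : closure ((Subgroup.closure s : Subgroup G) : Set G) = Set.univ) :
    closure ((Submonoid.closure s : Submonoid G) : Set G) = Set.univ := by
  set M : Submonoid G := (Submonoid.closure s).topologicalClosure with hM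
  have hMclosed : IsClosed (M : Set G) := Submonoid.isClosed_topologicalClosure _
  have hMcompact : IsCompact (M : Set G) := hMclosed.isCompact
  have hMinv : ∀ x ∈ M, x⁻¹ ∈ M := by
    intro x hx
    obtain ⟨a, -, ψ, hψ, hlim⟩ :=
      hMcompact.tendsto_subseq (x := fun n => x ^ n) (fun n => pow_mem hx n)
    -- `x` commutes with the limit `a`
    have hlim' : Filter.Tendsto (fun k => x ^ ψ k) Filter.atTop (nhds a) := hlim
    have hc : Commute x a := by
      have h1 : Filter.Tendsto (fun k => x ^ ψ k * x) Filter.atTop (nhds (a * x)) :=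
        hlim'.mul_const x
      have h2 : Filter.Tendsto (fun k => x ^ ψ k * x) Filter.atTop (nhds (x * a)) := by
        have := hlim'.const_mul x
        simpa [← pow_succ, ← pow_succ'] using this
      exact (tendsto_nhds_unique h2 h1)
    -- the sequence x ^ (ψ (k+1) - (ψ k + 1)) tends to x⁻¹
    have hmemv : ∀ k, x ^ ψ (k + 1) * (x ^ (ψ k + 1))⁻¹ ∈ M := by
      intro k
      have hle : ψ k + 1 ≤ ψ (k + 1) := hψ (Nat.lt_succ_self k)
      have hmul : x ^ (ψ (k + 1) - (ψ k + 1)) * x ^ (ψ k + 1) = x ^ ψ (k + 1) := by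
        rw [← pow_add, Nat.sub_add_cancel hle]
      have : x ^ ψ (k + 1) * (x ^ (ψ k + 1))⁻¹ = x ^ (ψ (k + 1) - (ψ k + 1)) :=
        (eq_mul_inv_of_mul_eq hmul).symm
      rw [this]
      exact pow_mem hx _
    have hlim1 : Filter.Tendsto (fun k => x ^ ψ (k + 1)) Filter.atTop (nhds a) :=
      hlim'.comp (Filter.tendsto_add_atTop_nat 1)
    have hlim2 : Filter.Tendsto (fun k => x ^ (ψ k + 1)) Filter.atTop (nhds (a * x)) := by
      have := hlim'.mul_const x
      simpa [pow_succ] using this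
    have hlimv : Filter.Tendsto (fun k => x ^ ψ (k + 1) * (x ^ (ψ k + 1))⁻¹) Filter.atTop
        (nhds (a * (a * x)⁻¹)) := hlim1.mul hlim2.inv
    have hval : a * (a * x)⁻¹ = x⁻¹ := by
      rw [mul_inv_rev, ← mul_assoc, ← hc.inv_left.eq, mul_inv_cancel_right]
    rw [hval] at hlimv
    exact hMclosed.mem_of_tendsto hlimv (Filter.Eventually.of_forall hmemv)
  -- M is a subgroup containing the subgroup generated by s
  set N : Subgroup G :=
    { toSubmonoid := M, inv_mem' := fun {x} hx => hMinv x hx } with hN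
  have hsub : ((Subgroup.closure s : Subgroup G) : Set G) ⊆ (M : Set G) := by
    have hle : Subgroup.closure s ≤ N :=
      (Subgroup.closure_le N).mpr (fun g hg =>
        Submonoid.le_topologicalClosure _ (Submonoid.subset_closure hg))
    exact fun x hx => hle hx
  have huniv : Set.univ ⊆ (M : Set G) := by
    rw [← hgen]
    exact closure_minimal hsub hMclosed
  have : (M : Set G) = Set.univ := Set.eq_univ_of_univ_subset huniv
  simpa [hM, Submonoid.topologicalClosure] using this

/-- Lemma 4.3: for a compact metrizable group `G` acting continuously on a metric space `Q` and a
finite nonempty topological generating set `C_G ⊆ G`, a Borel probability measure `p` satisfies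
`(1/|C_G|)·∑_{g∈C_G} (T g)_* p = p` if and only if `(T g)_* p = p` for every `g ∈ G`. -/
theorem symmetrization_fixed_iff_invariant
    {Q : Type*} [MetricSpace Q] [MeasurableSpace Q] [BorelSpace Q]
    {G : Type*} [Group G] [TopologicalSpace G] [IsTopologicalGroup G] [CompactSpace G]
    [TopologicalSpace.MetrizableSpace G] [MeasurableSpace G] [BorelSpace G]
    (T : G → Q → Q)
    (hTcont : Continuous (fun x : G × Q => T x.1 x.2))
    (hTmul : ∀ g h : G, ∀ q : Q, T g (T h q) = T (g * h) q)
    (hTone : ∀ q : Q, T 1 q = q)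
    (p : Measure Q) [IsProbabilityMeasure p]
    (CG : Finset G) (hCG : CG.Nonempty)
    (hgen : closure ((Subgroup.closure (CG : Set G) : Subgroup G) : Set G) = Set.univ) :
    ((CG.card : ℝ≥0∞))⁻¹ • ∑ g ∈ CG, Measure.map (T g) p = p
      ↔ ∀ g : G, Measure.map (T g) p = p := by
  have hcard0 : (CG.card : ℝ≥0∞) ≠ 0 := by
    exact_mod_cast Nat.cast_ne_zero.mpr hCG.card_pos.ne'
  have hcardR : (CG.card : ℝ) ≠ 0 := Nat.cast_ne_zero.mpr hCG.card_pos.ne'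
  have hTg_cont : ∀ h : G, Continuous (T h) := fun h =>
    hTcont.comp (continuous_const.prodMk continuous_id)
  have hTg_meas : ∀ h : G, Measurable (T h) := fun h => (hTg_cont h).measurable
  constructor
  · intro hp g
    haveI : IsProbabilityMeasure (Measure.map (T g) p) :=
      Measure.isProbabilityMeasure_map (hTg_meas g).aemeasurable
    apply ext_of_forall_lintegral_eq_of_IsFiniteMeasure
    intro f
    -- the real-valued averages
    set φ : G → ℝ := fun h => ∫ q, (f (T h q) : ℝ) ∂p with hφdef
    have hFcont : ∀ h : G, Continuous fun q => (f (T h q) : ℝ) := fun h =>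
      NNReal.continuous_coe.comp (f.continuous.comp (hTg_cont h))
    set C : ℝ := dist f 0 with hC
    have hbound : ∀ h : G, ∀ q : Q, ‖(f (T h q) : ℝ)‖ ≤ C := fun h q => by
      have := BoundedContinuousFunction.dist_coe_le_dist (f := f) (g := 0) (T h q)
      simpa [NNReal.dist_eq, Real.norm_eq_abs] using this
    have hint : ∀ (h : G) (μ : Measure Q) [IsFiniteMeasure μ],
        Integrable (fun q => (f (T h q) : ℝ)) μ := by
      intro h μ _
      exact (integrable_const C).mono' (hFcont h).aestronglyMeasurable
        (Filter.Eventually.of_forall (hbound h))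
    -- continuity of φ
    have hφcont : Continuous φ := by
      apply continuous_of_dominated (bound := fun _ : Q => C)
      · exact fun h => (hFcont h).aestronglyMeasurable
      · exact fun h => Filter.Eventually.of_forall (hbound h)
      · exact integrable_const _
      · refine Filter.Eventually.of_forall (fun q => ?_)
        exact NNReal.continuous_coe.comp
          (f.continuous.comp (hTcont.comp (continuous_id.prodMk continuous_const)))
    -- key harmonicity identity
    have key : ∀ h : G, φ h = (CG.card : ℝ)⁻¹ * ∑ g ∈ CG, φ (h * g) := by
      intro h
      have h1 : φ h = ∫ q, (f (T h q) : ℝ)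
          ∂(((CG.card : ℝ≥0∞))⁻¹ • ∑ g ∈ CG, Measure.map (T g) p) := by
        rw [hp]
      rw [h1, integral_smul_measure]
      have h2 : ∫ q, (f (T h q) : ℝ) ∂(∑ g ∈ CG, Measure.map (T g) p)
          = ∑ g ∈ CG, ∫ q, (f (T h q) : ℝ) ∂(Measure.map (T g) p) := by
        apply integral_finset_sum_measure
        intro g _
        haveI : IsProbabilityMeasure (Measure.map (T g) p) :=
          Measure.isProbabilityMeasure_map (hTg_meas g).aemeasurable
        exact hint h _
      rw [h2]
      have h3 : ∀ g ∈ CG, ∫ q, (f (T h q) : ℝ) ∂(Measure.map (T g) p) = φ (h * g) := by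
        intro g _
        rw [integral_map (hTg_meas g).aemeasurable (hFcont h).aestronglyMeasurable]
        simp only [hφdef, hTmul]
      rw [Finset.sum_congr rfl h3]
      simp [ENNReal.toReal_inv, smul_eq_mul]
    -- maximum of φ
    obtain ⟨h₀, -, hmax⟩ := isCompact_univ.exists_isMaxOn (Set.univ_nonempty)
      hφcont.continuousOn
    have hM : ∀ h : G, φ h ≤ φ h₀ := fun h => hmax (Set.mem_univ h)
    -- the set where the maximum is attained is invariant under right multiplication by CG
    have step : ∀ h : G, φ h = φ h₀ → ∀ g ∈ CG, φ (h * g) = φ h₀ := by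
      intro h hh
      have hsum : ∑ g ∈ CG, φ (h * g) = ∑ g ∈ CG, φ h₀ := by
        have hk := key h
        rw [hh] at hk
        rw [Finset.sum_const, nsmul_eq_mul]
        field_simp at hk
        linarith
      exact fun g hg =>
        (Finset.sum_eq_sum_iff_of_le (fun i _ => hM (h * i))).mp hsum g hg
    -- by induction, the maximum is attained on h₀ * (monoid generated by CG)
    have keymem : ∀ s ∈ Submonoid.closure (CG : Set G),
        ∀ h : G, φ h = φ h₀ → φ (h * s) = φ h₀ := by
      intro s hs
      induction hs using Submonoid.closure_induction with
      | mem x hx => exact fun h hh => step h hh x hx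
      | one => intro h hh; simpa using hh
      | mul x y hx hy ihx ihy =>
          intro h hh
          rw [← mul_assoc]
          exact ihy _ (ihx _ hh)
    -- hence on all of G by density
    have hA : ∀ z : G, φ (h₀ * z) = φ h₀ := by
      have hclosed : IsClosed {z : G | φ (h₀ * z) = φ h₀} :=
        isClosed_eq (hφcont.comp (continuous_const.mul continuous_id)) continuous_const
      have hsub : ((Submonoid.closure (CG : Set G) : Submonoid G) : Set G)
          ⊆ {z : G | φ (h₀ * z) = φ h₀} := fun s hs => keymem s hs h₀ rfl
      have hcl := closure_minimal hsub hclosed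
      rw [aux_closure_submonoid_eq_univ (CG : Set G) hgen] at hcl
      exact fun z => hcl (Set.mem_univ z)
    have hconst : ∀ h : G, φ h = φ 1 := by
      intro h
      have h1 := hA (h₀⁻¹ * h)
      rw [mul_inv_cancel_left] at h1
      have h2 := hA h₀⁻¹
      rw [mul_inv_cancel] at h2
      rw [h1, h2]
    -- conclude equality of lintegrals
    have hmeasf : Measurable fun q : Q => (f q : ℝ≥0∞) :=
      measurable_coe_nnreal_ennreal.comp f.continuous.measurable
    rw [lintegral_map hmeasf (hTg_meas g)]
    have e1 : ∫⁻ q, (f (T g q) : ℝ≥0∞) ∂p = ENNReal.ofReal (φ g) := by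
      rw [hφdef]
      exact lintegral_coe_eq_integral (fun q => f (T g q)) (hint g p)
    have e2 : ENNReal.ofReal (φ 1) = ∫⁻ q, (f q : ℝ≥0∞) ∂p := by
      rw [hφdef]
      simp only [hTone]
      exact (lintegral_coe_eq_integral (fun q => f q)
        (by simpa [hTone] using hint 1 p)).symm
    rw [e1, hconst g]
    exact e2
  · intro h
    rw [Finset.sum_congr rfl (fun g _ => h g), Finset.sum_const,
      ← Nat.cast_smul_eq_nsmul ℝ≥0∞, smul_smul, ENNReal.inv_mul_cancel hcard0
        (ENNReal.natCast_ne_top _), one_smul]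
end
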